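/- Let c : ℕ → ℝ₊ with c(0) = 0 and c(k) > 0 for k ≥ 1, and suppose there exist δ > 0 and n₀ ∈ ℕ such that c(m) - c(n) ≥ δ whenever m ≥ n + n₀, and sup_n |c(n+1) - c(n)| ≤ C < ∞. Define c̃(k) = c(k) + (1/n₀) Σ_{j=1}^{n₀-1} ((n₀-j)/n₀)·(c(k+j) + c(k-j) - 2c(k)) for k ≥ n₀, and c̃(k) = c̃(n₀)·k/n₀ for k < n₀. Then there exists δ' > 0 such that c̃(k+1) - c̃(k) ≥ δ' for all k ∈ ℕ. -/

import Mathlib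

open Finset


lemma myShift (g : ℕ → ℝ) : ∀ N : ℕ, ∑ j ∈ Icc 1 N, g j = ∑ m ∈ range N, g (m + 1) := by
  intro N
  induction N with
  | zero => simp
  | succ N ih =>
    rw [Finset.sum_Icc_succ_top (by omega), ih, Finset.sum_range_succ]

lemma myTele (f : ℕ → ℝ) (b : ℕ) : ∀ N : ℕ,
    ∑ l ∈ range N, f (b + 1 + l) - ∑ l ∈ range N, f (b + l) = f (b + N) - f b := by
  intro N
  induction N with
  | zero => simp
  | succ N ih =>
    rw [Finset.sum_range_succ, Finset.sum_range_succ,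
      show b + 1 + N = b + (N + 1) by omega]
    linarith

lemma myGauss : ∀ N : ℕ, ∑ j ∈ Icc 1 (N - 1), ((N : ℝ) - j) = N * ((N:ℝ) - 1) / 2 := by
  intro N
  induction N with
  | zero => simp
  | succ N ih =>
    rcases Nat.eq_zero_or_pos N with h0 | hN
    · subst h0; simp
    have h1 : N - 1 + 1 = N := by omega
    have e := Finset.sum_Icc_succ_top (a := 1) (b := N - 1) (by omega)
      (fun j => ((N:ℝ) + 1 - j))
    rw [h1] at e
    simp only [Nat.add_sub_cancel]
    push_cast
    rw [e]
    have e2 : ∑ j ∈ Icc 1 (N - 1), ((N:ℝ) + 1 - j)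
        = ∑ j ∈ Icc 1 (N - 1), (((N : ℝ) - j) + 1) := by
      apply Finset.sum_congr rfl; intros; ring
    rw [e2, Finset.sum_add_distrib, ih, Finset.sum_const, Nat.card_Icc]
    have : ((N - 1 + 1 - 1 : ℕ) : ℝ) = (N : ℝ) - 1 := by
      push_cast [show N - 1 + 1 - 1 = N - 1 by omega, Nat.cast_sub hN]; ring
    rw [nsmul_eq_mul, this]
    ring

lemma myKey : ∀ (N : ℕ) (g : ℕ → ℝ),
    ∑ i ∈ range N, ∑ l ∈ range N, g (i + l)
      = ∑ j ∈ Icc 1 (N - 1), ((N : ℝ) - j) * (g (N - 1 + j) + g (N - 1 - j))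
        + (N : ℝ) * g (N - 1) := by
  intro N
  induction N with
  | zero => intro g; simp
  | succ N ih =>
    intro g
    rcases Nat.eq_zero_or_pos N with h0 | hN
    · subst h0; simp
    have h1 : N - 1 + 1 = N := by omega
    simp only [Nat.add_sub_cancel]
    push_cast
    have IH2 : ∑ i ∈ range N, ∑ l ∈ range N, g (i + l + 1)
        = ∑ j ∈ Icc 1 (N - 1), ((N : ℝ) - j) * (g (N + j) + g (N - j))
          + (N : ℝ) * g N := by
      rw [ih (fun m => g (m + 1)), h1]
      congr 1
      apply Finset.sum_congr rfl
      intro j hj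
      have hj2 := (Finset.mem_Icc.mp hj).2
      rw [show N - 1 + j + 1 = N + j by omega, show N - 1 - j + 1 = N - j by omega]
    set S1 := ∑ j ∈ Icc 1 (N - 1), ((N : ℝ) - j) * (g (N + j) + g (N - j)) with hS1
    have P1 : ∑ i ∈ range (N+1), ∑ l ∈ range (N+1), g (i + l)
        = ∑ i ∈ range N, ∑ l ∈ range N, g (i + l + 1)
          + ∑ l ∈ range N, g (N + 1 + l) + ∑ i ∈ range (N+1), g i := by
      have inner : ∀ i, ∑ l ∈ range (N+1), g (i + l)
          = ∑ l ∈ range N, g (i + l + 1) + g i := by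
        intro i
        rw [Finset.sum_range_succ' (fun l => g (i + l))]
        simp only [Nat.add_zero, ← Nat.add_assoc]
      rw [Finset.sum_congr rfl (fun i _ => inner i), Finset.sum_add_distrib,
        Finset.sum_range_succ (fun i => ∑ l ∈ range N, g (i + l + 1))]
      have : ∑ l ∈ range N, g (N + l + 1) = ∑ l ∈ range N, g (N + 1 + l) := by
        apply Finset.sum_congr rfl; intro x _; exact congrArg g (by omega)
      rw [this]
    have P3 : ∑ j ∈ Icc 1 N, ((N : ℝ) + 1 - j) * (g (N + j) + g (N - j))
        = S1 + (∑ j ∈ Icc 1 (N-1), g (N + j) + ∑ j ∈ Icc 1 (N-1), g (N - j))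
          + (g (N + N) + g 0) := by
      have e := Finset.sum_Icc_succ_top (a := 1) (b := N - 1) (by omega)
        (fun j => ((N : ℝ) + 1 - j) * (g (N + j) + g (N - j)))
      rw [h1] at e
      rw [e]
      have e2 : ∑ j ∈ Icc 1 (N-1), ((N : ℝ) + 1 - j) * (g (N + j) + g (N - j))
          = S1 + (∑ j ∈ Icc 1 (N-1), (g (N + j) + g (N - j))) := by
        rw [hS1, ← Finset.sum_add_distrib]
        apply Finset.sum_congr rfl; intro j _; ring
      rw [e2, Finset.sum_add_distrib, Nat.sub_self]
      ring
    have P5 : ∑ j ∈ Icc 1 (N-1), g (N + j) = ∑ m ∈ range (N-1), g (N + 1 + m) := by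
      rw [myShift (fun j => g (N + j))]
      apply Finset.sum_congr rfl; intro m _; exact congrArg g (by omega)
    have P6 : ∑ l ∈ range N, g (N + 1 + l)
        = ∑ l ∈ range (N-1), g (N + 1 + l) + g (N + N) := by
      have e := Finset.sum_range_succ (fun l => g (N + 1 + l)) (N-1)
      rw [h1, show N + 1 + (N - 1) = N + N by omega] at e
      exact e
    have P7 : ∑ j ∈ Icc 1 (N-1), g (N - j) = ∑ m ∈ range (N-1), g (m + 1) := by
      rw [myShift (fun j => g (N - j))]
      rw [← Finset.sum_range_reflect (fun m => g (m + 1)) (N-1)]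
      apply Finset.sum_congr rfl; intro m hm
      have := Finset.mem_range.mp hm
      exact congrArg g (by omega)
    have P8 : ∑ i ∈ range (N+1), g i
        = g 0 + ∑ m ∈ range (N-1), g (m + 1) + g N := by
      rw [Finset.sum_range_succ' g N]
      conv_lhs => rw [← h1]
      rw [Finset.sum_range_succ (fun m => g (m + 1)), h1]
      ring
    rw [P1, IH2, P3, P5, P6, P7, P8]
    ring

/-- under (H.1) and (H.2), the averaged rate `c̃` is uniformly strictly
increasing. -/
theorem averaged_rate_uniformly_increasing
    (c : ℕ → ℝ) (hc0 : c 0 = 0) (hcpos : ∀ k, 1 ≤ k → 0 < c k)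
    (δ : ℝ) (hδ : 0 < δ) (n₀ : ℕ) (hn₀ : 1 ≤ n₀)
    (H1 : ∀ n m : ℕ, n + n₀ ≤ m → δ ≤ c m - c n)
    (C : ℝ) (H2 : ∀ n : ℕ, |c (n + 1) - c n| ≤ C)
    (ct : ℕ → ℝ)
    (hct : ∀ k, n₀ ≤ k → ct k = c k + (1 / (n₀ : ℝ)) *
      ∑ j ∈ Finset.Icc 1 (n₀ - 1),
        (((n₀ : ℝ) - j) / n₀) * (c (k + j) + c (k - j) - 2 * c k))
    (hct' : ∀ k, k < n₀ → ct k = ct n₀ * k / n₀) :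
    ∃ δ' : ℝ, 0 < δ' ∧ ∀ k : ℕ, δ' ≤ ct (k + 1) - ct k := by
  have hn0R : (0 : ℝ) < n₀ := by exact_mod_cast hn₀
  have hn0ne : (n₀ : ℝ) ≠ 0 := ne_of_gt hn0R
  -- the double-average formula
  have hform : ∀ k, n₀ ≤ k → (n₀ : ℝ)^2 * ct k
      = ∑ i ∈ range n₀, ∑ l ∈ range n₀, c (k + 1 - n₀ + (i + l)) := by
    intro k hk
    have hkey : ∑ i ∈ range n₀, ∑ l ∈ range n₀, c (k + 1 - n₀ + (i + l))
        = ∑ j ∈ Icc 1 (n₀ - 1), ((n₀ : ℝ) - j) *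
            (c (k + 1 - n₀ + (n₀ - 1 + j)) + c (k + 1 - n₀ + (n₀ - 1 - j)))
          + (n₀ : ℝ) * c (k + 1 - n₀ + (n₀ - 1)) := myKey n₀ (fun m => c (k + 1 - n₀ + m))
    have e : ∑ j ∈ Icc 1 (n₀-1), ((n₀:ℝ) - j) *
          (c (k + 1 - n₀ + (n₀ - 1 + j)) + c (k + 1 - n₀ + (n₀ - 1 - j)))
        = ∑ j ∈ Icc 1 (n₀-1), ((n₀:ℝ) - j) * (c (k + j) + c (k - j)) := by
      apply Finset.sum_congr rfl; intro j hj
      have hj2 := (Finset.mem_Icc.mp hj).2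
      rw [show k + 1 - n₀ + (n₀ - 1 + j) = k + j by omega,
        show k + 1 - n₀ + (n₀ - 1 - j) = k - j by omega]
    rw [hkey, e, show k + 1 - n₀ + (n₀ - 1) = k by omega, hct k hk]
    have hsplit : ∑ j ∈ Icc 1 (n₀-1), ((n₀:ℝ) - j) / n₀ * (c (k + j) + c (k - j) - 2 * c k)
        = (∑ j ∈ Icc 1 (n₀-1), ((n₀:ℝ) - j) * (c (k + j) + c (k - j))) / n₀
          - (2 * c k / n₀) * ∑ j ∈ Icc 1 (n₀-1), ((n₀:ℝ) - j) := by
      rw [Finset.sum_div, Finset.mul_sum, ← Finset.sum_sub_distrib]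
      apply Finset.sum_congr rfl; intro j _
      field_simp
    rw [hsplit, myGauss n₀]
    field_simp
    ring
  -- uniform increase for k ≥ n₀
  have hbig : ∀ k, n₀ ≤ k → δ / n₀ ≤ ct (k + 1) - ct k := by
    intro k hk
    have h2 := hform (k + 1) (by omega)
    have h1' := hform k hk
    have step : ∀ i : ℕ, ∑ l ∈ range n₀, c (k + 1 + 1 - n₀ + (i + l))
        - ∑ l ∈ range n₀, c (k + 1 - n₀ + (i + l))
        = c (k + 1 - n₀ + i + n₀) - c (k + 1 - n₀ + i) := by
      intro i
      have t := myTele c (k + 1 - n₀ + i) n₀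
      have e1 : ∑ l ∈ range n₀, c (k + 1 + 1 - n₀ + (i + l))
          = ∑ l ∈ range n₀, c (k + 1 - n₀ + i + 1 + l) :=
        Finset.sum_congr rfl fun l _ => congrArg c (by omega)
      have e2 : ∑ l ∈ range n₀, c (k + 1 - n₀ + (i + l))
          = ∑ l ∈ range n₀, c (k + 1 - n₀ + i + l) :=
        Finset.sum_congr rfl fun l _ => congrArg c (by omega)
      rw [e1, e2]
      exact t
    have hsum : (n₀ : ℝ)^2 * (ct (k + 1) - ct k)
        = ∑ i ∈ range n₀, (c (k + 1 - n₀ + i + n₀) - c (k + 1 - n₀ + i)) := by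
      rw [mul_sub, h2, h1', ← Finset.sum_sub_distrib]
      exact Finset.sum_congr rfl fun i _ => step i
    have hbound : (n₀ : ℝ) * δ ≤ (n₀ : ℝ)^2 * (ct (k + 1) - ct k) := by
      rw [hsum]
      calc (n₀ : ℝ) * δ = ∑ _i ∈ range n₀, δ := by
            rw [Finset.sum_const, Finset.card_range, nsmul_eq_mul]
        _ ≤ _ := Finset.sum_le_sum fun i _ => H1 _ _ le_rfl
    rw [div_le_iff₀ hn0R]
    nlinarith [hbound]
  -- positivity of ct n₀
  have hpos : 0 < ct n₀ := by
    have h := hform n₀ le_rfl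
    have hS : 0 < ∑ i ∈ range n₀, ∑ l ∈ range n₀, c (n₀ + 1 - n₀ + (i + l)) := by
      apply Finset.sum_pos
      · intro i _
        apply Finset.sum_pos
        · intro l _
          exact hcpos _ (by omega)
        · exact ⟨0, Finset.mem_range.mpr hn₀⟩
      · exact ⟨0, Finset.mem_range.mpr hn₀⟩
    nlinarith [h, hS, sq_nonneg ((n₀ : ℝ))]
  -- small k
  have hsmall : ∀ k, k < n₀ → ct (k + 1) - ct k = ct n₀ / n₀ := by
    intro k hk
    by_cases h : k + 1 < n₀
    · rw [hct' (k + 1) h, hct' k hk]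
      push_cast
      field_simp
      ring
    · have hk1 : k + 1 = n₀ := by omega
      have hkc : (k : ℝ) = (n₀ : ℝ) - 1 := by
        have : ((k : ℝ) + 1) = (n₀ : ℝ) := by exact_mod_cast congrArg (Nat.cast : ℕ → ℝ) hk1
        linarith
      rw [hk1, hct' k hk, hkc]
      field_simp
      ring
  refine ⟨min (δ / n₀) (ct n₀ / n₀), lt_min (by positivity) (by positivity), fun k => ?_⟩
  rcases lt_or_ge k n₀ with h | h
  · rw [hsmall k h]
    exact min_le_right _ _
  · exact le_trans (min_le_left _ _) (hbig k h)
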